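/- For every finite group G with |G| < 12, the poset Iso(G) is a lattice (every pair of classes has a greatest lower bound and a least upper bound), while the dihedral group D₁₂ of order 12 is a group whose poset Iso(D₁₂) is not a lattice. Hence 12 is the smallest order of a finite group G for which Iso(G) is not a lattice. -/

import Mathlib

/-- The setoid on subgroups of `G` given by group isomorphism. -/
def isoSetoid (G : Type*) [Group G] : Setoid (Subgroup G) where
  r H K := Nonempty (H ≃* K)
  iseqv := ⟨fun H => ⟨MulEquiv.refl H⟩, fun ⟨e⟩ => ⟨e.symm⟩, fun ⟨e⟩ ⟨f⟩ => ⟨e.trans f⟩⟩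

/-- `IsoClasses G` is the set of equivalence classes of subgroups of `G`
under group isomorphism. -/
def IsoClasses (G : Type*) [Group G] : Type _ := Quotient (isoSetoid G)

/-- The class of a subgroup `H` in `IsoClasses G`. -/
def IsoCls {G : Type*} [Group G] (H : Subgroup G) : IsoClasses G :=
  Quotient.mk (isoSetoid G) H

/-- `[H] ≤ [K]` iff some member of `[H]` is contained in some member of `[K]`. -/
instance instLEIsoClasses (G : Type*) [Group G] : LE (IsoClasses G) where
  le x y := ∃ H K : Subgroup G, IsoCls H = x ∧ IsoCls K = y ∧ H ≤ K


/-- The pair `x, y` has a greatest lower bound in `IsoClasses G`. -/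
def IsoClasses.HasGLB {G : Type*} [Group G] (x y : IsoClasses G) : Prop :=
  ∃ z : IsoClasses G, z ≤ x ∧ z ≤ y ∧ ∀ w : IsoClasses G, w ≤ x → w ≤ y → w ≤ z

/-- The pair `x, y` has a least upper bound in `IsoClasses G`. -/
def IsoClasses.HasLUB {G : Type*} [Group G] (x y : IsoClasses G) : Prop :=
  ∃ z : IsoClasses G, x ≤ z ∧ y ≤ z ∧ ∀ w : IsoClasses G, x ≤ w → y ≤ w → z ≤ w

/-- The poset `IsoClasses G` is a lattice: every pair of classes has a greatest lower
bound and a least upper bound. -/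
def IsoClasses.IsLattice (G : Type*) [Group G] : Prop :=
  ∀ x y : IsoClasses G, IsoClasses.HasGLB x y ∧ IsoClasses.HasLUB x y

/-! ### Auxiliary material -/

namespace IsoLatAux

variable {G : Type*} [Group G]

lemma exists_rep (x : IsoClasses G) : ∃ H : Subgroup G, IsoCls H = x :=
  Quotient.inductionOn x fun H => ⟨H, rfl⟩

lemma cls_eq {H K : Subgroup G} (e : Nonempty (H ≃* K)) : IsoCls H = IsoCls K :=
  Quotient.sound e

lemma cls_exact {H K : Subgroup G} (h : IsoCls H = IsoCls K) : Nonempty (H ≃* K) :=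
  Quotient.exact h

/-- The cardinality of (any representative of) a class. -/
noncomputable def clsCard : IsoClasses G → ℕ :=
  Quotient.lift (fun H : Subgroup G => Nat.card H) fun _ _ ⟨e⟩ => Nat.card_congr e.toEquiv

lemma clsCard_mk (H : Subgroup G) : clsCard (IsoCls H) = Nat.card H := rfl

lemma le_refl' (x : IsoClasses G) : x ≤ x := by
  obtain ⟨H, rfl⟩ := exists_rep x
  exact ⟨H, H, rfl, rfl, le_rfl⟩

lemma bot_le' (x : IsoClasses G) : IsoCls (⊥ : Subgroup G) ≤ x := by
  obtain ⟨H, rfl⟩ := exists_rep x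
  exact ⟨⊥, H, rfl, rfl, bot_le⟩

lemma le_top' (x : IsoClasses G) : x ≤ IsoCls (⊤ : Subgroup G) := by
  obtain ⟨H, rfl⟩ := exists_rep x
  exact ⟨H, ⊤, rfl, rfl, le_top⟩

lemma clsCard_dvd_of_le [Finite G] {x y : IsoClasses G} (h : x ≤ y) :
    clsCard x ∣ clsCard y := by
  obtain ⟨H, K, hH, hK, hle⟩ := h
  rw [← hH, ← hK, clsCard_mk, clsCard_mk]
  exact Subgroup.card_dvd_of_le hle

lemma clsCard_dvd_card [Finite G] (x : IsoClasses G) : clsCard x ∣ Nat.card G := by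
  obtain ⟨H, rfl⟩ := exists_rep x
  rw [clsCard_mk]
  exact Subgroup.card_subgroup_dvd_card H

lemma clsCard_pos [Finite G] (x : IsoClasses G) : 0 < clsCard x := by
  obtain ⟨H, rfl⟩ := exists_rep x
  rw [clsCard_mk]
  exact Nat.card_pos

lemma eq_bot_cls {x : IsoClasses G} (h : clsCard x = 1) : x = IsoCls (⊥ : Subgroup G) := by
  obtain ⟨H, rfl⟩ := exists_rep x
  rw [clsCard_mk] at h
  rw [Subgroup.eq_bot_of_card_eq H h]

lemma eq_top_cls [Finite G] {x : IsoClasses G} (h : clsCard x = Nat.card G) :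
    x = IsoCls (⊤ : Subgroup G) := by
  obtain ⟨H, rfl⟩ := exists_rep x
  rw [clsCard_mk] at h
  rw [Subgroup.eq_top_of_card_eq H h]

lemma eq_of_le_of_clsCard_eq [Finite G] {x y : IsoClasses G} (hxy : x ≤ y)
    (h : clsCard x = clsCard y) : x = y := by
  obtain ⟨H, K, hH, hK, hle⟩ := hxy
  rw [← hH, ← hK] at h ⊢
  rw [clsCard_mk, clsCard_mk] at h
  rw [Subgroup.eq_of_le_of_card_ge hle h.ge]

lemma prime_cls_unique [Finite G] {p : ℕ} (hp : p.Prime) {x y : IsoClasses G}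
    (hx : clsCard x = p) (hy : clsCard y = p) : x = y := by
  obtain ⟨H, rfl⟩ := exists_rep x
  obtain ⟨K, rfl⟩ := exists_rep y
  rw [clsCard_mk] at hx hy
  haveI : Fact p.Prime := ⟨hp⟩
  exact cls_eq ⟨mulEquivOfPrimeCardEq hx hy⟩

lemma exists_prime_subgroup_le [Finite G] {p : ℕ} (hp : p.Prime) (H : Subgroup G)
    (hd : p ∣ Nat.card H) : ∃ L : Subgroup G, L ≤ H ∧ Nat.card L = p := by
  haveI : Fact p.Prime := ⟨hp⟩
  haveI : Fintype H := Fintype.ofFinite H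
  obtain ⟨h, hh⟩ := exists_prime_orderOf_dvd_card (G := H) p
    (by rwa [← Nat.card_eq_fintype_card])
  refine ⟨(Subgroup.zpowers h).map H.subtype, Subgroup.map_subtype_le _, ?_⟩
  rw [← Nat.card_congr (Subgroup.equivMapOfInjective _ _ H.subtype_injective).toEquiv,
    Nat.card_zpowers, hh]

lemma le_of_prime_dvd [Finite G] {x y : IsoClasses G} (hp : (clsCard x).Prime)
    (hd : clsCard x ∣ clsCard y) : x ≤ y := by
  obtain ⟨K, rfl⟩ := exists_rep y
  rw [clsCard_mk] at hd
  obtain ⟨L, hLK, hLcard⟩ := exists_prime_subgroup_le hp K hd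
  have hx : x = IsoCls L := prime_cls_unique hp rfl (by rw [clsCard_mk, hLcard])
  rw [hx]
  exact ⟨L, K, rfl, rfl, hLK⟩

lemma hasGLB_of_le {x y : IsoClasses G} (h : x ≤ y) : IsoClasses.HasGLB x y :=
  ⟨x, le_refl' x, h, fun _ hwx _ => hwx⟩

lemma hasLUB_of_le {x y : IsoClasses G} (h : x ≤ y) : IsoClasses.HasLUB x y :=
  ⟨y, h, le_refl' y, fun _ _ hyw => hyw⟩

lemma hasGLB_of_ge {x y : IsoClasses G} (h : y ≤ x) : IsoClasses.HasGLB x y :=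
  ⟨y, h, le_refl' y, fun _ _ hwy => hwy⟩

lemma hasLUB_of_ge {x y : IsoClasses G} (h : y ≤ x) : IsoClasses.HasLUB x y :=
  ⟨x, le_refl' x, h, fun _ hxw _ => hxw⟩

/-! ### Numerical lemmas -/

lemma bound_of_proper_dvd {n c : ℕ} (h0 : 0 < n) (hc : c ∣ n) (hcn : c ≠ n) : 2 * c ≤ n := by
  obtain ⟨k, hk⟩ := hc
  have hk0 : k ≠ 0 := by rintro rfl; omega
  have hk1 : k ≠ 1 := by rintro rfl; omega
  calc 2 * c ≤ k * c := Nat.mul_le_mul_right c (by omega)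
  _ = n := by rw [hk, Nat.mul_comm]

set_option maxHeartbeats 1000000 in
lemma arith {n cx cy : ℕ} (h0 : 0 < n) (hn : n < 12) (hcx : cx ∣ n) (hcy : cy ∣ n)
    (hx1 : cx ≠ 1) (hy1 : cy ≠ 1) (hxn : cx ≠ n) (hyn : cy ≠ n)
    (h2x : ¬(cx = 2 ∧ 2 ∣ cy)) (h3x : ¬(cx = 3 ∧ 3 ∣ cy)) (h5x : ¬(cx = 5 ∧ 5 ∣ cy))
    (h2y : ¬(cy = 2 ∧ 2 ∣ cx)) (h3y : ¬(cy = 3 ∧ 3 ∣ cx)) (h5y : ¬(cy = 5 ∧ 5 ∣ cx)) :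
    (cx = 2 ∧ cy = 3 ∧ n = 6) ∨ (cx = 3 ∧ cy = 2 ∧ n = 6) ∨ (cx = 2 ∧ cy = 5 ∧ n = 10) ∨
      (cx = 5 ∧ cy = 2 ∧ n = 10) ∨ (cx = 4 ∧ cy = 4 ∧ n = 8) := by
  have hx0 : 0 < cx := Nat.pos_of_dvd_of_pos hcx h0
  have hy0 : 0 < cy := Nat.pos_of_dvd_of_pos hcy h0
  have hxle := bound_of_proper_dvd h0 hcx hxn
  have hyle := bound_of_proper_dvd h0 hcy hyn
  have hx5 : cx = 2 ∨ cx = 3 ∨ cx = 4 ∨ cx = 5 := by omega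
  have hy5 : cy = 2 ∨ cy = 3 ∨ cy = 4 ∨ cy = 5 := by omega
  rcases hx5 with rfl | rfl | rfl | rfl <;> rcases hy5 with rfl | rfl | rfl | rfl <;> omega

lemma dvd4 (d : ℕ) (h : d ∣ 4) : d = 1 ∨ d = 2 ∨ d = 4 := by
  have := Nat.le_of_dvd (by norm_num) h
  interval_cases d <;> omega

lemma dvd48 (d : ℕ) (h : 4 ∣ d) (h' : d ∣ 8) : d = 4 ∨ d = 8 := by
  have := Nat.le_of_dvd (by norm_num) h'
  interval_cases d <;> omega

/-! ### The positive half -/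

/-- In the coprime configuration the pair `x, y` has a GLB and a LUB. -/
lemma lattice_of_coprime {G : Type} [Group G] [Finite G] {x y : IsoClasses G}
    (hcop : Nat.Coprime (clsCard x) (clsCard y))
    (hmul : clsCard x * clsCard y = Nat.card G) :
    IsoClasses.HasGLB x y ∧ IsoClasses.HasLUB x y := by
  constructor
  · refine ⟨IsoCls ⊥, bot_le' x, bot_le' y, fun w hwx hwy => ?_⟩
    have h1 := clsCard_dvd_of_le hwx
    have h2 := clsCard_dvd_of_le hwy
    have h3 : clsCard w = 1 := (Nat.Coprime.coprime_dvd_left h1 hcop).eq_one_of_dvd h2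
    rw [eq_bot_cls h3]
    exact le_refl' _
  · refine ⟨IsoCls ⊤, le_top' x, le_top' y, fun w hxw hyw => ?_⟩
    have h1 := clsCard_dvd_of_le hxw
    have h2 := clsCard_dvd_of_le hyw
    have h3 : clsCard w ∣ Nat.card G := clsCard_dvd_card w
    have h4 : Nat.card G ∣ clsCard w := by
      rw [← hmul]; exact Nat.Coprime.mul_dvd_of_dvd_of_dvd hcop h1 h2
    have h5 : clsCard w = Nat.card G := Nat.dvd_antisymm h3 h4
    rw [eq_top_cls h5]
    exact le_refl' _

lemma pos_part (G : Type) [Group G] [Finite G] (hlt : Nat.card G < 12) :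
    IsoClasses.IsLattice G := by
  intro x y
  by_cases hxy : x ≤ y
  · exact ⟨hasGLB_of_le hxy, hasLUB_of_le hxy⟩
  by_cases hyx : y ≤ x
  · exact ⟨hasGLB_of_ge hyx, hasLUB_of_ge hyx⟩
  have hxney : x ≠ y := fun h => hxy (by rw [h]; exact le_refl' y)
  have h0 : 0 < Nat.card G := Nat.card_pos
  have hx1 : clsCard x ≠ 1 := fun h => hxy (by rw [eq_bot_cls h]; exact bot_le' y)
  have hy1 : clsCard y ≠ 1 := fun h => hyx (by rw [eq_bot_cls h]; exact bot_le' x)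
  have hxn : clsCard x ≠ Nat.card G := fun h => hyx (by rw [eq_top_cls h]; exact le_top' y)
  have hyn : clsCard y ≠ Nat.card G := fun h => hxy (by rw [eq_top_cls h]; exact le_top' x)
  have h2x : ¬(clsCard x = 2 ∧ 2 ∣ clsCard y) := by
    rintro ⟨h1, h2⟩
    exact hxy (le_of_prime_dvd (by rw [h1]; norm_num) (by rw [h1]; exact h2))
  have h3x : ¬(clsCard x = 3 ∧ 3 ∣ clsCard y) := by
    rintro ⟨h1, h2⟩
    exact hxy (le_of_prime_dvd (by rw [h1]; norm_num) (by rw [h1]; exact h2))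
  have h5x : ¬(clsCard x = 5 ∧ 5 ∣ clsCard y) := by
    rintro ⟨h1, h2⟩
    exact hxy (le_of_prime_dvd (by rw [h1]; norm_num) (by rw [h1]; exact h2))
  have h2y : ¬(clsCard y = 2 ∧ 2 ∣ clsCard x) := by
    rintro ⟨h1, h2⟩
    exact hyx (le_of_prime_dvd (by rw [h1]; norm_num) (by rw [h1]; exact h2))
  have h3y : ¬(clsCard y = 3 ∧ 3 ∣ clsCard x) := by
    rintro ⟨h1, h2⟩
    exact hyx (le_of_prime_dvd (by rw [h1]; norm_num) (by rw [h1]; exact h2))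
  have h5y : ¬(clsCard y = 5 ∧ 5 ∣ clsCard x) := by
    rintro ⟨h1, h2⟩
    exact hyx (le_of_prime_dvd (by rw [h1]; norm_num) (by rw [h1]; exact h2))
  have key := arith h0 hlt (clsCard_dvd_card x) (clsCard_dvd_card y) hx1 hy1 hxn hyn
    h2x h3x h5x h2y h3y h5y
  rcases key with ⟨ha, hb, hn⟩ | ⟨ha, hb, hn⟩ | ⟨ha, hb, hn⟩ | ⟨ha, hb, hn⟩ | ⟨ha, hb, hn⟩
  · exact lattice_of_coprime (by rw [ha, hb]; norm_num) (by rw [ha, hb, hn])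
  · exact lattice_of_coprime (by rw [ha, hb]; norm_num) (by rw [ha, hb, hn])
  · exact lattice_of_coprime (by rw [ha, hb]; norm_num) (by rw [ha, hb, hn])
  · exact lattice_of_coprime (by rw [ha, hb]; norm_num) (by rw [ha, hb, hn])
  · -- `|G| = 8`, both classes of order `4`
    obtain ⟨H, hH⟩ := exists_rep x
    obtain ⟨K, hK⟩ := exists_rep y
    have hH4 : Nat.card H = 4 := by rw [← clsCard_mk, hH, ha]
    have hK4 : Nat.card K = 4 := by rw [← clsCard_mk, hK, hb]
    obtain ⟨L, hLH, hL2⟩ := exists_prime_subgroup_le Nat.prime_two H (by rw [hH4]; norm_num)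
    obtain ⟨L', hL'K, hL'2⟩ := exists_prime_subgroup_le Nat.prime_two K (by rw [hK4]; norm_num)
    have hLL' : IsoCls L = IsoCls L' :=
      prime_cls_unique Nat.prime_two (by rw [clsCard_mk, hL2]) (by rw [clsCard_mk, hL'2])
    constructor
    · refine ⟨IsoCls L, ?_, ?_, ?_⟩
      · rw [← hH]; exact ⟨L, H, rfl, rfl, hLH⟩
      · rw [hLL', ← hK]; exact ⟨L', K, rfl, rfl, hL'K⟩
      · intro w hwx hwy
        have hdw : clsCard w ∣ 4 := by
          have := clsCard_dvd_of_le hwx; rwa [ha] at this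
        rcases dvd4 _ hdw with h | h | h
        · rw [eq_bot_cls h]; exact bot_le' _
        · have : w = IsoCls L :=
            prime_cls_unique Nat.prime_two h (by rw [clsCard_mk, hL2])
          rw [this]; exact le_refl' _
        · exact absurd ((eq_of_le_of_clsCard_eq hwx (by rw [h, ha])).symm.trans
            (eq_of_le_of_clsCard_eq hwy (by rw [h, hb]))) hxney
    · refine ⟨IsoCls ⊤, le_top' x, le_top' y, fun w hxw hyw => ?_⟩
      have h4d : 4 ∣ clsCard w := by
        have := clsCard_dvd_of_le hxw; rwa [ha] at this
      have h8 : clsCard w ∣ 8 := by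
        have := clsCard_dvd_card w; rwa [hn] at this
      rcases dvd48 _ h4d h8 with h | h
      · exact absurd ((eq_of_le_of_clsCard_eq hxw (by rw [h, ha])).trans
          (eq_of_le_of_clsCard_eq hyw (by rw [h, hb])).symm) hxney
      · have hw : w = IsoCls (⊤ : Subgroup G) := eq_top_cls (by rw [h, hn])
        rw [hw]; exact le_refl' _

/-! ### The negative half: `D₁₂` -/

open DihedralGroup Subgroup

/-- The elements of the `S₃`-like subgroup of `D₁₂`. -/
def Kc : Finset (DihedralGroup 6) := {r 0, r 2, r 4, sr 0, sr 2, sr 4}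

/-- A subgroup of `D₁₂` isomorphic to `S₃`. -/
def K6 : Subgroup (DihedralGroup 6) where
  carrier := {x | x ∈ Kc}
  one_mem' := by decide
  mul_mem' := by decide
  inv_mem' := by decide

instance : DecidablePred (· ∈ K6) := fun x => decidable_of_iff (x ∈ Kc) Iff.rfl

lemma K6_card : Nat.card K6 = 6 := by
  rw [Nat.card_eq_fintype_card]; decide

lemma R_card : Nat.card (zpowers (r 1 : DihedralGroup 6)) = 6 := by
  rw [Nat.card_zpowers, orderOf_r_one]

lemma r2_mem_R : (r 2 : DihedralGroup 6) ∈ zpowers (r 1) := ⟨2, by decide⟩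
lemma r3_mem_R : (r 3 : DihedralGroup 6) ∈ zpowers (r 1) := ⟨3, by decide⟩
lemma r2_mem_K : (r 2 : DihedralGroup 6) ∈ K6 := by decide
lemma sr0_mem_K : (sr 0 : DihedralGroup 6) ∈ K6 := by decide

lemma card_zp_r2 : Nat.card (zpowers (r 2 : DihedralGroup 6)) = 3 := by
  rw [Nat.card_zpowers, orderOf_r]; decide
lemma card_zp_r3 : Nat.card (zpowers (r 3 : DihedralGroup 6)) = 2 := by
  rw [Nat.card_zpowers, orderOf_r]; decide
lemma card_zp_sr0 : Nat.card (zpowers (sr 0 : DihedralGroup 6)) = 2 := by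
  rw [Nat.card_zpowers, orderOf_sr]

lemma K6_not_iso : ¬ Nonempty ((zpowers (r 1 : DihedralGroup 6)) ≃* K6) := by
  rintro ⟨e⟩
  have hcomm : ∀ u v : K6, u * v = v * u := fun u v => by
    have h := (Subgroup.zpowers_isMulCommutative (r 1 : DihedralGroup 6)).is_comm.comm (e.symm u) (e.symm v)
    have h2 := congrArg e h
    simpa [map_mul] using h2
  have h := hcomm ⟨sr 0, sr0_mem_K⟩ ⟨r 2, r2_mem_K⟩
  have h3 : (sr 0 : DihedralGroup 6) * r 2 = r 2 * sr 0 := congrArg Subtype.val h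
  exact absurd h3 (by decide)

lemma neg_part : ¬ IsoClasses.IsLattice (DihedralGroup 6) := by
  intro hlat
  obtain ⟨z, hzx, hzy, hmax⟩ := (hlat (IsoCls (zpowers (r 1))) (IsoCls K6)).1
  have hw2 : IsoCls (zpowers (r 2 : DihedralGroup 6)) ≤ z :=
    hmax _ ⟨_, _, rfl, rfl, zpowers_le.2 r2_mem_R⟩ ⟨_, _, rfl, rfl, zpowers_le.2 r2_mem_K⟩
  have hw1 : IsoCls (zpowers (r 3 : DihedralGroup 6)) ≤ z := by
    refine hmax _ ⟨_, _, rfl, rfl, zpowers_le.2 r3_mem_R⟩ ?_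
    have heq : IsoCls (zpowers (r 3 : DihedralGroup 6)) = IsoCls (zpowers (sr 0)) :=
      prime_cls_unique Nat.prime_two (by rw [clsCard_mk, card_zp_r3])
        (by rw [clsCard_mk, card_zp_sr0])
    rw [heq]
    exact ⟨_, _, rfl, rfl, zpowers_le.2 sr0_mem_K⟩
  have h3 : 3 ∣ clsCard z := by
    have := clsCard_dvd_of_le hw2; rwa [clsCard_mk, card_zp_r2] at this
  have h2 : 2 ∣ clsCard z := by
    have := clsCard_dvd_of_le hw1; rwa [clsCard_mk, card_zp_r3] at this
  have h6 : clsCard z ∣ 6 := by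
    have := clsCard_dvd_of_le hzx; rwa [clsCard_mk, R_card] at this
  have hle := Nat.le_of_dvd (by norm_num) h6
  have hpos := clsCard_pos z
  have hz6 : clsCard z = 6 := by omega
  have hzR : z = IsoCls (zpowers (r 1)) :=
    eq_of_le_of_clsCard_eq hzx (by rw [hz6, clsCard_mk, R_card])
  have hzK : z = IsoCls K6 :=
    eq_of_le_of_clsCard_eq hzy (by rw [hz6, clsCard_mk, K6_card])
  exact K6_not_iso (cls_exact (hzR.symm.trans hzK))

end IsoLatAux

/-- For every finite group `G` with `|G| < 12` the poset `IsoClasses G`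
is a lattice, while for the dihedral group `D₁₂` of order `12` the poset
`IsoClasses D₁₂` is not a lattice; hence `12` is the smallest order of a finite group
whose poset of isomorphism classes of subgroups is not a lattice. -/
theorem isoClasses_lattice_lt_twelve_and_not_dihedral_twelve :
    (∀ (G : Type) [Group G] [Finite G], Nat.card G < 12 → IsoClasses.IsLattice G) ∧
      ¬ IsoClasses.IsLattice (DihedralGroup 6) := by
  exact ⟨IsoLatAux.pos_part, IsoLatAux.neg_part⟩
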